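/- For every pair δ ≥ ω > 0 there exists a convex body K in ℝⁿ with diameter δ and thickness ω such that sup_{u≠±v} |d_K(u)−d_K(v)|/ρ(u,v) = (δ/ω)·√(δ²−ω²). -/

import Mathlib

open scoped RealInnerProductSpace
open Metric Filter

/-- Width of `K` in direction `u`: distance between the two supporting
hyperplanes of `K` orthogonal to the unit vector `u`. -/
noncomputable def widthFn {n : ℕ} (K : Set (EuclideanSpace ℝ (Fin n)))
    (u : EuclideanSpace ℝ (Fin n)) : ℝ :=
  sSup ((fun x => ⟪x, u⟫) '' K) - sInf ((fun x => ⟪x, u⟫) '' K)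

/-- Diameter of `K` in direction `u`: maximal length of a chord of `K` parallel to `u`. -/
noncomputable def dirDiam {n : ℕ} (K : Set (EuclideanSpace ℝ (Fin n)))
    (u : EuclideanSpace ℝ (Fin n)) : ℝ :=
  sSup {d : ℝ | ∃ x ∈ K, ∃ y ∈ K, (∃ t : ℝ, x - y = t • u) ∧ d = dist x y}

/-- Projective spherical distance `ρ(u,v) = arccos |⟨u,v⟩|`. -/
noncomputable def rho {n : ℕ} (u v : EuclideanSpace ℝ (Fin n)) : ℝ :=
  Real.arccos |⟪u, v⟫|

/-- `e_K(O)`: maximal length of a chord of `K` cut by a line through `O`. -/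
noncomputable def eFn {n : ℕ} (K : Set (EuclideanSpace ℝ (Fin n)))
    (O : EuclideanSpace ℝ (Fin n)) : ℝ :=
  sSup {d : ℝ | ∃ x ∈ K, ∃ y ∈ K, Collinear ℝ ({O, x, y} : Set (EuclideanSpace ℝ (Fin n))) ∧
    d = dist x y}

/-- `s_K(u)`: maximal distance between a point of `K` in one supporting hyperplane
orthogonal to `u` and a point of `K` in the other. -/
noncomputable def sFn {n : ℕ} (K : Set (EuclideanSpace ℝ (Fin n)))
    (u : EuclideanSpace ℝ (Fin n)) : ℝ :=
  sSup {d : ℝ | ∃ A ∈ K, ∃ B ∈ K,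
    (∀ x ∈ K, ⟪x, u⟫ ≤ ⟪A, u⟫) ∧ (∀ x ∈ K, ⟪B, u⟫ ≤ ⟪x, u⟫) ∧ d = dist A B}

/-- `r_K(u)`: infimum over diametral chords `[AB]` for `u` and pairs of parallel
supporting hyperplanes `H₁ ∋ A`, `H₂ ∋ B` of the distance between `H₁` and `H₂`. -/
noncomputable def rFn {n : ℕ} (K : Set (EuclideanSpace ℝ (Fin n)))
    (u : EuclideanSpace ℝ (Fin n)) : ℝ :=
  sInf {d : ℝ | ∃ A ∈ K, ∃ B ∈ K, (∃ t : ℝ, A - B = t • u) ∧ dist A B = dirDiam K u ∧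
    ∃ v : EuclideanSpace ℝ (Fin n), ‖v‖ = 1 ∧
      (∀ x ∈ K, ⟪x, v⟫ ≤ ⟪A, v⟫) ∧ (∀ x ∈ K, ⟪B, v⟫ ≤ ⟪x, v⟫) ∧ d = ⟪A - B, v⟫}

namespace DirDiamAux

variable {n : ℕ}

lemma abs_coord_le_norm (x : EuclideanSpace ℝ (Fin n)) (i : Fin n) : |x i| ≤ ‖x‖ := by
  have h := abs_real_inner_le_norm x (EuclideanSpace.single i (1:ℝ))
  rw [EuclideanSpace.inner_single_right] at h
  simpa [EuclideanSpace.norm_single] using h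

lemma body_compact (i : Fin n) (δ ω : ℝ) :
    IsCompact (Metric.closedBall (0 : EuclideanSpace ℝ (Fin n)) (δ/2) ∩ {x | |x i| ≤ ω/2}) := by
  refine (isCompact_closedBall _ _).inter_right ?_
  exact isClosed_le (continuous_abs.comp (EuclideanSpace.proj i).continuous) continuous_const

lemma body_convex (i : Fin n) (δ ω : ℝ) :
    Convex ℝ (Metric.closedBall (0 : EuclideanSpace ℝ (Fin n)) (δ/2) ∩ {x | |x i| ≤ ω/2}) := by
  intro x hx y hy a b ha hb hab
  simp only [Set.mem_inter_iff, mem_closedBall_zero_iff, Set.mem_setOf_eq] at *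
  constructor
  · calc ‖a • x + b • y‖ ≤ ‖a • x‖ + ‖b • y‖ := norm_add_le _ _
      _ = a * ‖x‖ + b * ‖y‖ := by
          rw [norm_smul, norm_smul, Real.norm_eq_abs, Real.norm_eq_abs,
            abs_of_nonneg ha, abs_of_nonneg hb]
      _ ≤ a * (δ/2) + b * (δ/2) := by gcongr; exact hx.1; exact hy.1
      _ = δ/2 := by rw [← add_mul, hab, one_mul]
  · have h : (a • x + b • y) i = a * x i + b * y i := rfl
    rw [h]
    calc |a * x i + b * y i| ≤ |a * x i| + |b * y i| := abs_add_le _ _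
      _ = a * |x i| + b * |y i| := by
          rw [abs_mul, abs_mul, abs_of_nonneg ha, abs_of_nonneg hb]
      _ ≤ a * (ω/2) + b * (ω/2) := by gcongr; exact hx.2; exact hy.2
      _ = ω/2 := by rw [← add_mul, hab, one_mul]

lemma ball_subset_body {i : Fin n} {δ ω : ℝ} (hδ : ω ≤ δ) :
    Metric.closedBall (0 : EuclideanSpace ℝ (Fin n)) (ω/2) ⊆
      Metric.closedBall (0 : EuclideanSpace ℝ (Fin n)) (δ/2) ∩ {x | |x i| ≤ ω/2} := by
  intro x hx
  rw [mem_closedBall_zero_iff] at hx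
  exact ⟨mem_closedBall_zero_iff.2 (hx.trans (by linarith)),
    (abs_coord_le_norm x i).trans hx⟩

lemma body_interior_nonempty {i : Fin n} {δ ω : ℝ} (hω : 0 < ω) (hδ : ω ≤ δ) :
    (interior (Metric.closedBall (0 : EuclideanSpace ℝ (Fin n)) (δ/2) ∩
      {x | |x i| ≤ ω/2})).Nonempty := by
  refine ⟨0, ?_⟩
  have h1 : Metric.ball (0 : EuclideanSpace ℝ (Fin n)) (ω/2) ⊆ _ :=
    Metric.ball_subset_closedBall.trans (ball_subset_body (i := i) hδ)
  exact interior_maximal h1 Metric.isOpen_ball (Metric.mem_ball_self (by linarith))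

lemma diam_body (i j : Fin n) (hij : j ≠ i) (δ ω : ℝ) (hω : 0 < ω) (hδ : ω ≤ δ)
    (K : Set (EuclideanSpace ℝ (Fin n)))
    (hK : K = Metric.closedBall 0 (δ/2) ∩ {x | |x i| ≤ ω/2}) :
    Metric.diam K = δ := by
  have hδ0 : (0:ℝ) < δ := lt_of_lt_of_le hω hδ
  have hsub : K ⊆ Metric.closedBall 0 (δ/2) := hK ▸ Set.inter_subset_left
  have hb : Bornology.IsBounded K := (Metric.isBounded_closedBall).subset hsub
  have hle : Metric.diam K ≤ δ := by
    calc Metric.diam K ≤ Metric.diam (Metric.closedBall (0:EuclideanSpace ℝ (Fin n)) (δ/2)) :=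
          Metric.diam_mono hsub Metric.isBounded_closedBall
      _ ≤ 2 * (δ/2) := Metric.diam_closedBall (by linarith)
      _ = δ := by ring
  set e : EuclideanSpace ℝ (Fin n) := EuclideanSpace.single j (1:ℝ) with he_def
  have hei : e i = 0 := by
    rw [he_def, EuclideanSpace.single_apply, if_neg (Ne.symm hij)]
  have hem : ∀ c : ℝ, |c| ≤ δ/2 → c • e ∈ K := by
    intro c hc
    rw [hK]
    refine ⟨?_, ?_⟩
    · rw [Metric.mem_closedBall, dist_zero_right, norm_smul, EuclideanSpace.norm_single]
      simpa using hc
    · have h1 : (c • e) i = c * e i := rfl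
      simp only [Set.mem_setOf_eq, h1, hei, mul_zero, abs_zero]
      positivity
  have h1 : (δ/2) • e ∈ K := hem _ (by rw [abs_of_nonneg (by linarith)])
  have h2 : (-(δ/2)) • e ∈ K := hem _ (by rw [abs_neg, abs_of_nonneg (by linarith)])
  have hd : dist ((δ/2) • e) ((-(δ/2)) • e) = δ := by
    rw [dist_eq_norm, ← sub_smul, norm_smul, EuclideanSpace.norm_single]
    rw [Real.norm_eq_abs, abs_of_nonneg (by linarith : (0:ℝ) ≤ δ/2 - -(δ/2))]
    simp
  have hge : δ ≤ Metric.diam K := hd ▸ Metric.dist_le_diam_of_mem hb h1 h2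
  linarith

lemma width_inf (i : Fin n) (δ ω : ℝ) (hω : 0 < ω) (hδ : ω ≤ δ)
    (K : Set (EuclideanSpace ℝ (Fin n)))
    (hK : K = Metric.closedBall 0 (δ/2) ∩ {x | |x i| ≤ ω/2}) :
    (⨅ u : sphere (0 : EuclideanSpace ℝ (Fin n)) 1, widthFn K u) = ω := by
  have hδ0 : (0:ℝ) < δ := lt_of_lt_of_le hω hδ
  have hmem : ∀ x : EuclideanSpace ℝ (Fin n), ‖x‖ ≤ δ/2 → |x i| ≤ ω/2 → x ∈ K := by
    intro x h1 h2; rw [hK]; exact ⟨mem_closedBall_zero_iff.2 h1, h2⟩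
  have hball : ∀ x : EuclideanSpace ℝ (Fin n), ‖x‖ ≤ ω/2 → x ∈ K := fun x h =>
    hmem x (h.trans (by linarith)) ((abs_coord_le_norm x i).trans h)
  have himg : ∀ u : EuclideanSpace ℝ (Fin n), ‖u‖ = 1 →
      ((fun x => ⟪x, u⟫) '' K) ⊆ Set.Icc (-(δ/2)) (δ/2) := by
    rintro u hu - ⟨x, hx, rfl⟩
    have hx' : ‖x‖ ≤ δ/2 := by
      rw [hK] at hx; exact mem_closedBall_zero_iff.1 hx.1
    have := abs_real_inner_le_norm x u
    rw [hu, mul_one] at this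
    have := abs_le.1 (this.trans hx')
    exact ⟨this.1, this.2⟩
  have hbddA : ∀ u : EuclideanSpace ℝ (Fin n), ‖u‖ = 1 → BddAbove ((fun x => ⟪x, u⟫) '' K) :=
    fun u hu => BddAbove.mono (himg u hu) bddAbove_Icc
  have hbddB : ∀ u : EuclideanSpace ℝ (Fin n), ‖u‖ = 1 → BddBelow ((fun x => ⟪x, u⟫) '' K) :=
    fun u hu => BddBelow.mono (himg u hu) bddBelow_Icc
  have hlow : ∀ u : EuclideanSpace ℝ (Fin n), ‖u‖ = 1 → ω ≤ widthFn K u := by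
    intro u hu
    have h1 : (ω/2 : ℝ) • u ∈ K := hball _ (by
      rw [norm_smul, hu, mul_one, Real.norm_eq_abs, abs_le]; constructor <;> linarith)
    have h2 : (-(ω/2) : ℝ) • u ∈ K := hball _ (by
      rw [norm_smul, hu, mul_one, Real.norm_eq_abs, abs_le]; constructor <;> linarith)
    have e1 : ⟪((ω/2 : ℝ) • u), u⟫ = ω/2 := by
      rw [real_inner_smul_left, real_inner_self_eq_norm_sq, hu]; ring
    have e2 : ⟪((-(ω/2) : ℝ) • u), u⟫ = -(ω/2) := by
      rw [real_inner_smul_left, real_inner_self_eq_norm_sq, hu]; ring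
    have hs1 : (ω/2 : ℝ) ≤ sSup ((fun x => ⟪x, u⟫) '' K) :=
      le_csSup (hbddA u hu) ⟨_, h1, e1⟩
    have hs2 : sInf ((fun x => ⟪x, u⟫) '' K) ≤ -(ω/2) :=
      csInf_le (hbddB u hu) ⟨_, h2, e2⟩
    unfold widthFn; linarith
  set e : EuclideanSpace ℝ (Fin n) := EuclideanSpace.single i (1:ℝ) with he_def
  have hue : ‖e‖ = 1 := by simp [he_def, EuclideanSpace.norm_single]
  have hinner : ∀ x : EuclideanSpace ℝ (Fin n), ⟪x, e⟫ = x i := by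
    intro x; rw [he_def, EuclideanSpace.inner_single_right]; simp
  have hwe : widthFn K e = ω := by
    have hup : ∀ d ∈ (fun x => ⟪x, e⟫) '' K, d ≤ ω/2 := by
      rintro - ⟨x, hx, rfl⟩
      simp only [hinner]
      rw [hK] at hx
      exact (le_abs_self _).trans hx.2
    have hlo : ∀ d ∈ (fun x => ⟪x, e⟫) '' K, -(ω/2) ≤ d := by
      rintro - ⟨x, hx, rfl⟩
      simp only [hinner]
      rw [hK] at hx
      have h2 : |x i| ≤ ω/2 := hx.2
      have := neg_le_abs (x i); linarith
    have hm1 : (ω/2 : ℝ) • e ∈ K := hball _ (by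
      rw [norm_smul, hue, mul_one, Real.norm_eq_abs, abs_le]; constructor <;> linarith)
    have hm2 : (-(ω/2) : ℝ) • e ∈ K := hball _ (by
      rw [norm_smul, hue, mul_one, Real.norm_eq_abs, abs_le]; constructor <;> linarith)
    have e1 : ⟪((ω/2 : ℝ) • e), e⟫ = ω/2 := by
      rw [real_inner_smul_left, real_inner_self_eq_norm_sq, hue]; ring
    have e2 : ⟪((-(ω/2) : ℝ) • e), e⟫ = -(ω/2) := by
      rw [real_inner_smul_left, real_inner_self_eq_norm_sq, hue]; ring
    have hsup : sSup ((fun x => ⟪x, e⟫) '' K) = ω/2 :=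
      le_antisymm (csSup_le ⟨_, ⟨_, hm1, rfl⟩⟩ hup) (le_csSup (hbddA e hue) ⟨_, hm1, e1⟩)
    have hinf : sInf ((fun x => ⟪x, e⟫) '' K) = -(ω/2) :=
      le_antisymm (csInf_le (hbddB e hue) ⟨_, hm2, e2⟩) (le_csInf ⟨_, ⟨_, hm1, rfl⟩⟩ hlo)
    unfold widthFn; rw [hsup, hinf]; ring
  have hnesp : Nonempty (sphere (0 : EuclideanSpace ℝ (Fin n)) 1) :=
    ⟨⟨e, by simp [mem_sphere_zero_iff_norm, hue]⟩⟩
  refine le_antisymm ?_ ?_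
  · have := ciInf_le (f := fun u : sphere (0 : EuclideanSpace ℝ (Fin n)) 1 => widthFn K u)
      ⟨ω, by rintro - ⟨u, rfl⟩; exact hlow u (mem_sphere_zero_iff_norm.1 u.2)⟩
      (⟨e, by simp [mem_sphere_zero_iff_norm, hue]⟩ : sphere (0 : EuclideanSpace ℝ (Fin n)) 1)
    simpa [hwe] using this
  · exact le_ciInf fun u => hlow u (mem_sphere_zero_iff_norm.1 u.2)

/-- The directional-diameter profile function. -/
noncomputable def gfn (δ ω t : ℝ) : ℝ := if δ * t ≤ ω then δ else ω / t

lemma dirDiam_body (i : Fin n) (δ ω : ℝ) (hω : 0 < ω) (hδ : ω ≤ δ)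
    (K : Set (EuclideanSpace ℝ (Fin n)))
    (hK : K = Metric.closedBall 0 (δ/2) ∩ {x | |x i| ≤ ω/2})
    (u : EuclideanSpace ℝ (Fin n)) (hu : ‖u‖ = 1) :
    dirDiam K u = gfn δ ω |u i| := by
  have hδ0 : (0:ℝ) < δ := lt_of_lt_of_le hω hδ
  have hmem : ∀ x : EuclideanSpace ℝ (Fin n), x ∈ K ↔ ‖x‖ ≤ δ/2 ∧ |x i| ≤ ω/2 := by
    intro x; rw [hK]; simp [mem_closedBall_zero_iff]
  set S : Set ℝ := {d : ℝ | ∃ x ∈ K, ∃ y ∈ K, (∃ t : ℝ, x - y = t • u) ∧ d = dist x y} with hS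
  have hchord : ∀ L : ℝ, 0 ≤ L → L ≤ δ → L * |u i| ≤ ω → L ∈ S := by
    intro L hL0 hLδ hLω
    refine ⟨(L/2) • u, ?_, (-(L/2)) • u, ?_, ⟨L, by rw [← sub_smul]; ring_nf⟩, ?_⟩
    · rw [hmem]
      constructor
      · rw [norm_smul, hu, mul_one, Real.norm_eq_abs, abs_of_nonneg (by linarith)]; linarith
      · have h : ((L/2 : ℝ) • u) i = (L/2) * u i := rfl
        rw [h, abs_mul, abs_of_nonneg (by linarith : (0:ℝ) ≤ L/2)]
        nlinarith [abs_nonneg (u i)]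
    · rw [hmem]
      constructor
      · rw [norm_smul, hu, mul_one, Real.norm_eq_abs, abs_neg,
          abs_of_nonneg (by linarith)]; linarith
      · have h : ((-(L/2) : ℝ) • u) i = (-(L/2)) * u i := rfl
        rw [h, abs_mul, abs_neg, abs_of_nonneg (by linarith : (0:ℝ) ≤ L/2)]
        nlinarith [abs_nonneg (u i)]
    · rw [dist_eq_norm, ← sub_smul, norm_smul, hu, mul_one, Real.norm_eq_abs]
      rw [show L/2 - -(L/2) = L by ring, abs_of_nonneg hL0]
  have hboundδ : ∀ d ∈ S, d ≤ δ := by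
    rintro d ⟨x, hx, y, hy, -, rfl⟩
    rw [hmem] at hx hy
    calc dist x y ≤ ‖x‖ + ‖y‖ := dist_le_norm_add_norm x y
      _ ≤ δ/2 + δ/2 := add_le_add hx.1 hy.1
      _ = δ := by ring
  have hbddS : BddAbove S := ⟨δ, hboundδ⟩
  rw [gfn]
  by_cases hcase : δ * |u i| ≤ ω
  · rw [if_pos hcase]
    have hδS : δ ∈ S := hchord δ hδ0.le le_rfl (by linarith [hcase])
    exact le_antisymm (csSup_le ⟨δ, hδS⟩ hboundδ) (le_csSup hbddS hδS)
  · rw [if_neg hcase]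
    push_neg at hcase
    have ht0 : 0 < |u i| := by nlinarith
    have hLδ : ω / |u i| ≤ δ := by
      rw [div_le_iff₀ ht0]; linarith
    have hLS : ω / |u i| ∈ S := by
      refine hchord _ (by positivity) hLδ ?_
      rw [div_mul_cancel₀ _ (ne_of_gt ht0)]
    have hbound : ∀ d ∈ S, d ≤ ω / |u i| := by
      rintro d ⟨x, hx, y, hy, ⟨t, htxy⟩, rfl⟩
      rw [hmem] at hx hy
      have hcoord : x i - y i = t * u i := by
        have := congrArg (fun z : EuclideanSpace ℝ (Fin n) => z i) htxy
        simpa using this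
      have h1 : |x i - y i| ≤ ω := by
        calc |x i - y i| ≤ |x i| + |y i| := abs_sub _ _
          _ ≤ ω/2 + ω/2 := add_le_add hx.2 hy.2
          _ = ω := by ring
      have hdist : dist x y = |t| := by
        rw [dist_eq_norm, htxy, norm_smul, hu, mul_one, Real.norm_eq_abs]
      rw [hdist]
      rw [hcoord, abs_mul] at h1
      rw [le_div_iff₀ ht0]
      exact h1
    exact le_antisymm (csSup_le ⟨_, hLS⟩ hbound) (le_csSup ⟨δ, hboundδ⟩ hLS)

lemma arccos_anti {a b : ℝ} (h : a ≤ b) : Real.arccos b ≤ Real.arccos a := by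
  unfold Real.arccos
  exact sub_le_sub_left (Real.monotone_arcsin h) _

open Real in
lemma core (δ ω : ℝ) (hω : 0 < ω) (hδ : ω ≤ δ) {a b : ℝ}
    (ha : ω/δ ≤ a) (ha1 : a ≤ 1) (hb : ω/δ ≤ b) (hb1 : b ≤ 1) :
    |ω/a - ω/b| ≤ ((δ/ω) * Real.sqrt (δ^2 - ω^2)) * |Real.arccos a - Real.arccos b| := by
  have hδ0 : (0:ℝ) < δ := lt_of_lt_of_le hω hδ
  have hρ : (0:ℝ) < ω/δ := by positivity
  set θ₁ := Real.arccos (ω/δ) with hθ₁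
  have hωδ1 : ω/δ ≤ 1 := by rw [div_le_one hδ0]; exact hδ
  have hcosθ₁ : Real.cos θ₁ = ω/δ := Real.cos_arccos (by linarith) hωδ1
  have hθ₁half : θ₁ ≤ π/2 := Real.arccos_le_pi_div_two.2 hρ.le
  set s : Set ℝ := Set.Icc 0 θ₁ with hs
  set C := (δ/ω) * Real.sqrt (δ^2 - ω^2) with hC
  have key : ∀ θ ∈ s, Real.cos θ ≠ 0 := by
    rintro θ ⟨h0, h1⟩
    have hcc : Real.cos θ ≥ Real.cos θ₁ :=
      Real.cos_le_cos_of_nonneg_of_le_pi h0 (by linarith [Real.pi_pos]) h1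
    rw [hcosθ₁] at hcc
    nlinarith
  have hderiv : ∀ θ ∈ s, HasDerivWithinAt (fun θ => ω / Real.cos θ)
      (ω * Real.sin θ / (Real.cos θ)^2) s θ := by
    intro θ hθ
    have h : HasDerivAt (fun θ => ω / Real.cos θ) _ θ :=
      ((hasDerivAt_const θ ω).div (Real.hasDerivAt_cos θ) (key θ hθ))
    exact (h.congr_deriv (by ring)).hasDerivWithinAt
  have hbound : ∀ θ ∈ s, ‖ω * Real.sin θ / (Real.cos θ)^2‖ ≤ C := by
    rintro θ ⟨h0, h1⟩
    have hcos : ω/δ ≤ Real.cos θ := by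
      rw [← hcosθ₁]
      exact Real.cos_le_cos_of_nonneg_of_le_pi h0 (by linarith [Real.pi_pos]) h1
    have hsin0 : 0 ≤ Real.sin θ :=
      Real.sin_nonneg_of_nonneg_of_le_pi h0 (by linarith [Real.pi_pos])
    have hsin : Real.sin θ ≤ Real.sin θ₁ :=
      Real.sin_le_sin_of_le_of_le_pi_div_two (by linarith [Real.pi_pos]) hθ₁half h1
    have hsinθ₁ : Real.sin θ₁ = Real.sqrt (1 - (ω/δ)^2) := by
      rw [hθ₁, Real.sin_arccos]
    have hsq : Real.sqrt (δ^2 - ω^2) = δ * Real.sqrt (1 - (ω/δ)^2) := by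
      rw [show δ^2 - ω^2 = δ^2 * (1 - (ω/δ)^2) by field_simp,
        Real.sqrt_mul (by positivity), Real.sqrt_sq hδ0.le]
    rw [Real.norm_eq_abs, abs_of_nonneg (by positivity)]
    have hcos0 : (0:ℝ) < Real.cos θ := lt_of_lt_of_le hρ hcos
    have hsin1 : 0 ≤ Real.sin θ₁ := by rw [hsinθ₁]; positivity
    have h1' : ω * Real.sin θ / (Real.cos θ)^2 ≤ ω * Real.sin θ₁ / (ω/δ)^2 := by
      apply div_le_div₀ (by positivity) (by nlinarith) (by positivity) (by nlinarith)
    refine h1'.trans_eq ?_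
    rw [hsinθ₁, hC, hsq]
    field_simp
  have hmem : ∀ c : ℝ, ω/δ ≤ c → c ≤ 1 → Real.arccos c ∈ s := by
    intro c h1 h2
    exact ⟨Real.arccos_nonneg c, arccos_anti h1⟩
  have := Convex.norm_image_sub_le_of_norm_hasDerivWithin_le hderiv hbound (convex_Icc _ _)
      (hmem b hb hb1) (hmem a ha ha1)
  rw [Real.cos_arccos (by linarith) ha1, Real.cos_arccos (by linarith) hb1] at this
  simpa [Real.norm_eq_abs] using this

lemma gLip_aux (δ ω : ℝ) (hω : 0 < ω) (hδ : ω ≤ δ) {a b : ℝ}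
    (hab : a ≤ b) (hb1 : b ≤ 1) :
    |gfn δ ω a - gfn δ ω b| ≤
      ((δ/ω) * Real.sqrt (δ^2 - ω^2)) * |Real.arccos a - Real.arccos b| := by
  have hδ0 : (0:ℝ) < δ := lt_of_lt_of_le hω hδ
  set C := (δ/ω) * Real.sqrt (δ^2 - ω^2) with hC
  have hC0 : 0 ≤ C := by positivity
  have harc : Real.arccos b ≤ Real.arccos a := arccos_anti hab
  by_cases h2 : δ * b ≤ ω
  · have h1 : δ * a ≤ ω := le_trans (by nlinarith) h2
    rw [gfn, gfn, if_pos h1, if_pos h2, sub_self, abs_zero]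
    positivity
  · push_neg at h2
    have hb0 : 0 < b := by nlinarith
    have hωδb : ω/δ ≤ b := by rw [div_le_iff₀ hδ0]; nlinarith
    have hωδ1 : ω/δ ≤ 1 := by rw [div_le_one hδ0]; exact hδ
    by_cases h1 : δ * a ≤ ω
    · rw [gfn, gfn, if_pos h1, if_neg (not_le.2 h2)]
      have hcore := core δ ω hω hδ (le_refl (ω/δ)) hωδ1 hωδb hb1
      rw [show ω / (ω/δ) = δ by field_simp] at hcore
      have hle : ω/b ≤ δ := by rw [div_le_iff₀ hb0]; nlinarith
      have harc2 : Real.arccos (ω/δ) ≤ Real.arccos a :=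
        arccos_anti (by rw [le_div_iff₀ hδ0]; linarith)
      have harc3 : Real.arccos b ≤ Real.arccos (ω/δ) := arccos_anti hωδb
      rw [abs_of_nonneg (by linarith), abs_of_nonneg (by linarith)] at hcore
      rw [abs_of_nonneg (by linarith), abs_of_nonneg (by linarith)]
      nlinarith
    · push_neg at h1
      have ha : ω/δ ≤ a := by rw [div_le_iff₀ hδ0]; nlinarith
      rw [gfn, gfn, if_neg (not_le.2 h1), if_neg (not_le.2 h2)]
      exact core δ ω hω hδ ha (hab.trans hb1) hωδb hb1

lemma gLip (δ ω : ℝ) (hω : 0 < ω) (hδ : ω ≤ δ) {a b : ℝ}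
    (ha1 : a ≤ 1) (hb1 : b ≤ 1) :
    |gfn δ ω a - gfn δ ω b| ≤
      ((δ/ω) * Real.sqrt (δ^2 - ω^2)) * |Real.arccos a - Real.arccos b| := by
  rcases le_total a b with h | h
  · exact gLip_aux δ ω hω hδ h hb1
  · rw [abs_sub_comm, abs_sub_comm (Real.arccos a)]
    exact gLip_aux δ ω hω hδ h ha1

open Real in
/-- projective triangle inequality -/
lemma proj_tri (u v e : EuclideanSpace ℝ (Fin n)) (hu : ‖u‖ = 1) (hv : ‖v‖ = 1)
    (he : ‖e‖ = 1) :
    Real.arccos |⟪u, e⟫| ≤ Real.arccos |⟪u, v⟫| + Real.arccos |⟪v, e⟫| := by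
  have hc1 : |⟪u, v⟫| ≤ 1 := by
    have := abs_real_inner_le_norm u v; rwa [hu, hv, mul_one] at this
  have hd1 : |⟪v, e⟫| ≤ 1 := by
    have := abs_real_inner_le_norm v e; rwa [hv, he, mul_one] at this
  set a := Real.arccos |⟪u, v⟫| with ha
  set b := Real.arccos |⟪v, e⟫| with hb
  have hab0 : 0 ≤ a + b := by
    have := Real.arccos_nonneg |⟪u, v⟫|; have := Real.arccos_nonneg |⟪v, e⟫|; linarith
  have habπ : a + b ≤ π := by
    have h1 : a ≤ π/2 := Real.arccos_le_pi_div_two.2 (abs_nonneg _)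
    have h2 : b ≤ π/2 := Real.arccos_le_pi_div_two.2 (abs_nonneg _)
    linarith
  have hvv : ⟪v, v⟫ = (1:ℝ) := by
    rw [real_inner_self_eq_norm_sq, hv]; norm_num
  set u' : EuclideanSpace ℝ (Fin n) := u - ⟪u,v⟫ • v with hu'
  set e' : EuclideanSpace ℝ (Fin n) := e - ⟪v,e⟫ • v with he'
  have hiu : ⟪u', e'⟫ = ⟪u, e⟫ - ⟪u,v⟫ * ⟪v,e⟫ := by
    rw [hu', he']
    simp only [inner_sub_left, inner_sub_right, real_inner_smul_left, real_inner_smul_right, hvv,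
      mul_one, real_inner_comm v u]
    ring
  have hnu : ‖u'‖^2 = 1 - ⟪u,v⟫^2 := by
    rw [← real_inner_self_eq_norm_sq, hu']
    simp only [inner_sub_left, inner_sub_right, real_inner_smul_left, real_inner_smul_right, hvv,
      mul_one, real_inner_comm v u]
    rw [real_inner_self_eq_norm_sq, hu]
    ring
  have hne : ‖e'‖^2 = 1 - ⟪v,e⟫^2 := by
    rw [← real_inner_self_eq_norm_sq, he']
    simp only [inner_sub_left, inner_sub_right, real_inner_smul_left, real_inner_smul_right, hvv,
      mul_one, real_inner_comm v e]
    rw [real_inner_self_eq_norm_sq, he]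
    ring
  have hnu' : ‖u'‖ = Real.sqrt (1 - ⟪u,v⟫^2) := by
    rw [← hnu, Real.sqrt_sq (norm_nonneg _)]
  have hne' : ‖e'‖ = Real.sqrt (1 - ⟪v,e⟫^2) := by
    rw [← hne, Real.sqrt_sq (norm_nonneg _)]
  have hkey : Real.cos (a + b) ≤ |⟪u, e⟫| := by
    rw [Real.cos_add]
    rw [ha, hb, Real.cos_arccos (by linarith [abs_nonneg ⟪u,v⟫]) hc1,
      Real.cos_arccos (by linarith [abs_nonneg ⟪v,e⟫]) hd1,
      Real.sin_arccos, Real.sin_arccos, sq_abs, sq_abs]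
    have hcs := abs_real_inner_le_norm u' e'
    rw [hiu, hnu', hne'] at hcs
    have habs := abs_sub_abs_le_abs_sub (⟪u,v⟫ * ⟪v,e⟫) ⟪u,e⟫
    rw [abs_sub_comm] at habs
    rw [abs_mul] at habs
    linarith
  calc Real.arccos |⟪u, e⟫| ≤ Real.arccos (Real.cos (a+b)) := arccos_anti hkey
    _ = a + b := Real.arccos_cos hab0 habπ

open Real in
lemma slope_tendsto (δ ω : ℝ) (hω : 0 < ω) (hδ : ω < δ) :
    Tendsto (fun θ => (δ - ω / Real.cos θ) / (Real.arccos (ω/δ) - θ))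
      (nhdsWithin (Real.arccos (ω/δ)) (Set.Iio (Real.arccos (ω/δ))))
      (nhds ((δ/ω) * Real.sqrt (δ^2 - ω^2))) := by
  have hδ0 : (0:ℝ) < δ := lt_trans hω hδ
  set θ₁ := Real.arccos (ω/δ) with hθ₁
  have hρ0 : (0:ℝ) < ω/δ := by positivity
  have hρ1 : ω/δ < 1 := by rw [div_lt_one hδ0]; exact hδ
  have hcosθ₁ : Real.cos θ₁ = ω/δ := Real.cos_arccos (by linarith) hρ1.le
  have hsinθ₁ : Real.sin θ₁ = Real.sqrt (1 - (ω/δ)^2) := Real.sin_arccos _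
  have hcos0 : Real.cos θ₁ ≠ 0 := by rw [hcosθ₁]; positivity
  have hsq : Real.sqrt (δ^2 - ω^2) = δ * Real.sqrt (1 - (ω/δ)^2) := by
    rw [show δ^2 - ω^2 = δ^2 * (1 - (ω/δ)^2) by field_simp,
      Real.sqrt_mul (by positivity), Real.sqrt_sq hδ0.le]
  have hder : HasDerivAt (fun θ => ω / Real.cos θ) ((δ/ω) * Real.sqrt (δ^2 - ω^2)) θ₁ := by
    have h : HasDerivAt (fun θ => ω / Real.cos θ) _ θ₁ :=
      (hasDerivAt_const θ₁ ω).div (Real.hasDerivAt_cos θ₁) hcos0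
    convert h using 1
    rw [hcosθ₁, hsinθ₁, hsq]
    field_simp
    ring
  have hsl := hasDerivAt_iff_tendsto_slope.1 hder
  have hmono : nhdsWithin θ₁ (Set.Iio θ₁) ≤ nhdsWithin θ₁ {θ₁}ᶜ :=
    nhdsWithin_mono _ (fun x hx => ne_of_lt hx)
  have h2 := hsl.mono_left hmono
  refine h2.congr' ?_
  filter_upwards [self_mem_nhdsWithin] with θ (hθ : θ < θ₁)
  rw [slope_def_field]
  have hfθ₁ : ω / Real.cos θ₁ = δ := by rw [hcosθ₁]; field_simp
  rw [hfθ₁]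
  rw [div_eq_div_iff (by linarith) (by linarith)]
  ring

noncomputable def uvec (i j : Fin n) (θ : ℝ) : EuclideanSpace ℝ (Fin n) :=
  Real.cos θ • EuclideanSpace.single i 1 + Real.sin θ • EuclideanSpace.single j 1

lemma uvec_inner (i j : Fin n) (hij : i ≠ j) (θ φ : ℝ) :
    ⟪uvec i j θ, uvec i j φ⟫ = Real.cos (θ - φ) := by
  unfold uvec
  simp only [inner_add_left, inner_add_right, real_inner_smul_left, real_inner_smul_right,
    EuclideanSpace.inner_single_left, EuclideanSpace.single_apply, map_one, one_mul]
  rw [Real.cos_sub]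
  simp [if_neg hij, if_neg (Ne.symm hij)]
  ring

lemma uvec_norm (i j : Fin n) (hij : i ≠ j) (θ : ℝ) : ‖uvec i j θ‖ = 1 := by
  have h := uvec_inner i j hij θ θ
  rw [sub_self, Real.cos_zero, real_inner_self_eq_norm_sq] at h
  nlinarith [norm_nonneg (uvec i j θ)]

lemma uvec_coord (i j : Fin n) (hij : i ≠ j) (θ : ℝ) : (uvec i j θ) i = Real.cos θ := by
  simp [uvec, PiLp.add_apply, PiLp.smul_apply, EuclideanSpace.single_apply, hij]

end DirDiamAux

theorem dirDiam_lipschitz_constant_optimal {n : ℕ} (hn : 2 ≤ n) (δ ω : ℝ)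
    (hω : 0 < ω) (hδ : ω ≤ δ) :
    ∃ K : Set (EuclideanSpace ℝ (Fin n)),
      IsCompact K ∧ Convex ℝ K ∧ (interior K).Nonempty ∧
      Metric.diam K = δ ∧
      (⨅ u : sphere (0 : EuclideanSpace ℝ (Fin n)) 1, widthFn K u) = ω ∧
      sSup {q : ℝ | ∃ u v : EuclideanSpace ℝ (Fin n), ‖u‖ = 1 ∧ ‖v‖ = 1 ∧
          u ≠ v ∧ u ≠ -v ∧ q = |dirDiam K u - dirDiam K v| / rho u v} =
        (δ / ω) * Real.sqrt (δ ^ 2 - ω ^ 2) := by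
  classical
  open DirDiamAux in
  have hδ0 : (0:ℝ) < δ := lt_of_lt_of_le hω hδ
  set i : Fin n := ⟨0, by omega⟩ with hi
  set j : Fin n := ⟨1, by omega⟩ with hj
  have hij : i ≠ j := by simp [hi, hj, Fin.ext_iff]
  set K : Set (EuclideanSpace ℝ (Fin n)) :=
    Metric.closedBall 0 (δ/2) ∩ {x | |x i| ≤ ω/2} with hK
  refine ⟨K, DirDiamAux.body_compact i δ ω, DirDiamAux.body_convex i δ ω,
    DirDiamAux.body_interior_nonempty hω hδ,
    DirDiamAux.diam_body i j (Ne.symm hij) δ ω hω hδ K hK,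
    DirDiamAux.width_inf i δ ω hω hδ K hK, ?_⟩
  set C := (δ/ω) * Real.sqrt (δ^2 - ω^2) with hC
  have hC0 : 0 ≤ C := by positivity
  set Q : Set ℝ := {q : ℝ | ∃ u v : EuclideanSpace ℝ (Fin n), ‖u‖ = 1 ∧ ‖v‖ = 1 ∧
      u ≠ v ∧ u ≠ -v ∧ q = |dirDiam K u - dirDiam K v| / rho u v} with hQ
  have hd : ∀ u : EuclideanSpace ℝ (Fin n), ‖u‖ = 1 →
      dirDiam K u = DirDiamAux.gfn δ ω |u i| := fun u hu =>
    DirDiamAux.dirDiam_body i δ ω hω hδ K hK u hu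
  -- upper bound
  have hub : ∀ q ∈ Q, q ≤ C := by
    rintro q ⟨u, v, hu, hv, huv, huv', rfl⟩
    have h1 : ⟪u, v⟫ < 1 := (inner_lt_one_iff_real_of_norm_eq_one hu hv).2 huv
    have hnv : ‖-v‖ = 1 := by rwa [norm_neg]
    have h2' : ⟪u, -v⟫ < 1 := (inner_lt_one_iff_real_of_norm_eq_one hu hnv).2 huv'
    rw [inner_neg_right] at h2'
    have habs : |⟪u, v⟫| < 1 := abs_lt.2 ⟨by linarith, h1⟩
    have hρpos : 0 < rho u v := by
      rw [rho]; exact Real.arccos_pos.2 habs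
    rw [div_le_iff₀ hρpos]
    have ha1 : |u i| ≤ 1 := by
      have := DirDiamAux.abs_coord_le_norm u i; rwa [hu] at this
    have hb1 : |v i| ≤ 1 := by
      have := DirDiamAux.abs_coord_le_norm v i; rwa [hv] at this
    rw [hd u hu, hd v hv]
    set a₀ := |u i| with ha₀
    set b₀ := |v i| with hb₀
    have hg := DirDiamAux.gLip δ ω hω hδ ha1 hb1
    set e : EuclideanSpace ℝ (Fin n) := EuclideanSpace.single i (1:ℝ) with he_def
    have hue : ‖e‖ = 1 := by simp [he_def, EuclideanSpace.norm_single]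
    have hinu : ⟪u, e⟫ = u i := by rw [he_def, EuclideanSpace.inner_single_right]; simp
    have hinv : ⟪v, e⟫ = v i := by rw [he_def, EuclideanSpace.inner_single_right]; simp
    have htri : |Real.arccos a₀ - Real.arccos b₀| ≤ rho u v := by
      rw [abs_sub_le_iff]
      constructor
      · have := DirDiamAux.proj_tri u v e hu hv hue
        rw [hinu, hinv] at this
        rw [rho]; linarith
      · have := DirDiamAux.proj_tri v u e hv hu hue
        rw [hinu, hinv, real_inner_comm u v] at this
        rw [rho]; linarith
    calc |DirDiamAux.gfn δ ω a₀ - DirDiamAux.gfn δ ω b₀|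
        ≤ C * |Real.arccos a₀ - Real.arccos b₀| := hg
      _ ≤ C * rho u v := by gcongr
  -- a canonical element of Q
  have hQne : Q.Nonempty := by
    set e1 : EuclideanSpace ℝ (Fin n) := EuclideanSpace.single i (1:ℝ) with he1
    set e2 : EuclideanSpace ℝ (Fin n) := EuclideanSpace.single j (1:ℝ) with he2
    have hn1 : ‖e1‖ = 1 := by simp [he1, EuclideanSpace.norm_single]
    have hn2 : ‖e2‖ = 1 := by simp [he2, EuclideanSpace.norm_single]
    have hinner12 : ⟪e1, e2⟫ = (0:ℝ) := by
      rw [he1, he2, EuclideanSpace.inner_single_right, EuclideanSpace.single_apply]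
      simp [Ne.symm hij]
    have hne : e1 ≠ e2 := by
      intro h
      rw [h] at hinner12
      rw [real_inner_self_eq_norm_sq, hn2] at hinner12
      norm_num at hinner12
    have hne' : e1 ≠ -e2 := by
      intro h
      rw [h, inner_neg_left] at hinner12
      rw [real_inner_self_eq_norm_sq, hn2] at hinner12
      norm_num at hinner12
    exact ⟨_, e1, e2, hn1, hn2, hne, hne', rfl⟩
  have hbddQ : BddAbove Q := ⟨C, hub⟩
  refine le_antisymm (csSup_le hQne hub) ?_
  -- lower bound
  rcases eq_or_lt_of_le hδ with heq | hlt
  · -- ω = δ : C = 0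
    have hCzero : C = 0 := by
      rw [hC, ← heq]
      simp [sub_self]
    rw [hCzero]
    obtain ⟨q, hq⟩ := hQne
    refine le_trans ?_ (le_csSup hbddQ hq)
    obtain ⟨u, v, hu, hv, h3, h4, rfl⟩ := hq
    exact div_nonneg (abs_nonneg _) (by rw [rho]; exact Real.arccos_nonneg _)
  · -- ω < δ : limit argument
    set θ₁ := Real.arccos (ω/δ) with hθ₁
    have hρ0 : (0:ℝ) < ω/δ := by positivity
    have hρ1 : ω/δ < 1 := by rw [div_lt_one hδ0]; exact hlt
    have hcosθ₁ : Real.cos θ₁ = ω/δ := Real.cos_arccos (by linarith) hρ1.le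
    have hθ₁pos : 0 < θ₁ := Real.arccos_pos.2 hρ1
    have hθ₁half : θ₁ ≤ Real.pi/2 := Real.arccos_le_pi_div_two.2 hρ0.le
    have htend := DirDiamAux.slope_tendsto δ ω hω hlt
    rw [← hθ₁] at htend
    refine le_of_tendsto htend ?_
    filter_upwards [Ioo_mem_nhdsLT hθ₁pos]
      with θ hθ
    obtain ⟨hθ0, hθθ₁⟩ := hθ
    have hcosθpos : 0 < Real.cos θ := by
      apply Real.cos_pos_of_mem_Ioo
      constructor <;> [linarith [Real.pi_pos]; linarith]
    have hcosgt : Real.cos θ₁ < Real.cos θ := by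
      apply Real.cos_lt_cos_of_nonneg_of_le_pi hθ0.le (by linarith [Real.pi_pos]) hθθ₁
    rw [hcosθ₁] at hcosgt
    -- the element of Q
    set u : EuclideanSpace ℝ (Fin n) := DirDiamAux.uvec i j θ₁ with hu_def
    set v : EuclideanSpace ℝ (Fin n) := DirDiamAux.uvec i j θ with hv_def
    have hu : ‖u‖ = 1 := DirDiamAux.uvec_norm i j hij θ₁
    have hv : ‖v‖ = 1 := DirDiamAux.uvec_norm i j hij θ
    have hinuv : ⟪u, v⟫ = Real.cos (θ₁ - θ) := DirDiamAux.uvec_inner i j hij θ₁ θ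
    have hsub0 : 0 < θ₁ - θ := by linarith
    have hsubπ : θ₁ - θ < Real.pi/2 := by linarith
    have hcosuv_pos : 0 < Real.cos (θ₁ - θ) := by
      apply Real.cos_pos_of_mem_Ioo
      constructor <;> [linarith [Real.pi_pos]; linarith]
    have hcosuv_lt : Real.cos (θ₁ - θ) < 1 := by
      have := Real.cos_lt_cos_of_nonneg_of_le_pi (le_refl 0) (by linarith [Real.pi_pos]) hsub0
      rwa [Real.cos_zero] at this
    have hne : u ≠ v := by
      intro h
      rw [h, real_inner_self_eq_norm_sq, hv] at hinuv
      norm_num at hinuv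
      linarith
    have hne' : u ≠ -v := by
      intro h
      rw [h, inner_neg_left, real_inner_self_eq_norm_sq, hv] at hinuv
      norm_num at hinuv
      linarith
    have hui : u i = Real.cos θ₁ := DirDiamAux.uvec_coord i j hij θ₁
    have hvi : v i = Real.cos θ := DirDiamAux.uvec_coord i j hij θ
    have hdu : dirDiam K u = δ := by
      rw [hd u hu, hui, hcosθ₁, abs_of_nonneg hρ0.le, DirDiamAux.gfn,
        if_pos (by rw [mul_div_cancel₀ _ (ne_of_gt hδ0)] )]
    have hdv : dirDiam K v = ω / Real.cos θ := by
      rw [hd v hv, hvi, abs_of_nonneg hcosθpos.le, DirDiamAux.gfn, if_neg]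
      push_neg
      calc ω = δ * (ω/δ) := by field_simp
        _ < δ * Real.cos θ := by gcongr
    have hrhouv : rho u v = θ₁ - θ := by
      rw [rho, hinuv, abs_of_nonneg hcosuv_pos.le,
        Real.arccos_cos hsub0.le (by linarith [Real.pi_pos])]
    have hnum_pos : 0 < δ - ω / Real.cos θ := by
      rw [sub_pos, div_lt_iff₀ hcosθpos]
      calc ω = δ * (ω/δ) := by field_simp
        _ < δ * Real.cos θ := by gcongr
    have hmemQ : (δ - ω / Real.cos θ) / (θ₁ - θ) ∈ Q := by
      refine ⟨u, v, hu, hv, hne, hne', ?_⟩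
      rw [hdu, hdv, hrhouv, abs_of_nonneg (by linarith)]
    exact le_csSup hbddQ hmemQ
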